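/- Let Z and Y be finite nonempty sets, M : Z → PMF(Y), λ > 0, B ≥ 0, and g : Y → ℝ with |g(y)| ≤ B for all y ∈ Y. For a probability vector φ ∈ ℝ^Z (nonnegative entries summing to 1), write P_φ(y) = Σ_{z∈Z} φ(z)·M(z)(y) and E_{P_φ}[g] = Σ_{y∈Y} P_φ(y)·g(y). Let u, φ_1, …, φ_k be probability vectors in ℝ^Z, and let Σ = Σ_{i=1}^{k} φ_i φ_i^⊤ + λ·I, a positive-definite Z×Z matrix. Then E_{P_u}[g] ≤ sqrt(u^⊤ Σ^{−1} u) · sqrt( Σ_{i=1}^{k} (E_{P_{φ_i}}[g])² + λ·B²·|Z| ). -/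

import Mathlib

open Finset Matrix

/-- Cauchy–Schwarz inequality for a positive semidefinite real matrix. -/
lemma psd_cauchy {n : Type} [Fintype n] [DecidableEq n] {A : Matrix n n ℝ}
    (hA : A.PosSemidef) (x y : n → ℝ) :
    (x ⬝ᵥ A *ᵥ y) ^ 2 ≤ (x ⬝ᵥ A *ᵥ x) * (y ⬝ᵥ A *ᵥ y) := by
  obtain ⟨S, hSsa, -, hSdef⟩ := open scoped MatrixOrder in
    CFC.exists_sqrt_of_isSelfAdjoint_of_quasispectrumRestricts hA.isHermitian
      (QuasispectrumRestricts.nnreal_of_nonneg hA.nonneg)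
  have hsymm : Sᵀ = S := by
    have := hSsa.star_eq
    simpa [Matrix.star_eq_conjTranspose, Matrix.conjTranspose_eq_transpose_of_trivial] using this
  have key : ∀ v w : n → ℝ, v ⬝ᵥ A *ᵥ w = (S *ᵥ v) ⬝ᵥ (S *ᵥ w) := by
    intro v w
    have h1 : S *ᵥ v = v ᵥ* S := by
      rw [← Matrix.mulVec_transpose, hsymm]
    rw [← hSdef, ← Matrix.mulVec_mulVec, Matrix.dotProduct_mulVec, h1]
  rw [key, key, key]
  have := Finset.sum_mul_sq_le_sq_mul_sq Finset.univ (S *ᵥ x) (S *ᵥ y)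
  simpa [dotProduct, pow_two, mul_comm] using this

theorem statement16
    {Z Y : Type} [Fintype Z] [Fintype Y] [Nonempty Z] [Nonempty Y] [DecidableEq Z]
    (M : Z → Y → ℝ) (hM0 : ∀ z y, 0 ≤ M z y) (hM1 : ∀ z, ∑ y : Y, M z y = 1)
    (lam : ℝ) (hlam : 0 < lam) (B : ℝ) (hB : 0 ≤ B)
    (g : Y → ℝ) (hg : ∀ y, |g y| ≤ B)
    (k : ℕ)
    (u : Z → ℝ) (hu0 : ∀ z, 0 ≤ u z) (hu1 : ∑ z : Z, u z = 1)
    (φ : Fin k → Z → ℝ) (hφ0 : ∀ i z, 0 ≤ φ i z) (hφ1 : ∀ i, ∑ z : Z, φ i z = 1) :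
    (∑ y : Y, (∑ z : Z, u z * M z y) * g y) ≤
      Real.sqrt (u ⬝ᵥ
          (((∑ i : Fin k, Matrix.of fun z z' => φ i z * φ i z') +
              lam • (1 : Matrix Z Z ℝ))⁻¹ *ᵥ u)) *
        Real.sqrt ((∑ i : Fin k, (∑ y : Y, (∑ z : Z, φ i z * M z y) * g y) ^ 2) +
          lam * B ^ 2 * Fintype.card Z) := by
  set h : Z → ℝ := fun z => ∑ y : Y, M z y * g y with hh
  have expand : ∀ v : Z → ℝ, (∑ y : Y, (∑ z : Z, v z * M z y) * g y) = v ⬝ᵥ h := by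
    intro v
    simp only [dotProduct, hh, Finset.sum_mul, Finset.mul_sum]
    rw [Finset.sum_comm]
    congr 1; ext z; congr 1; ext y; ring
  have hhB : ∀ z, |h z| ≤ B := by
    intro z
    calc |h z| ≤ ∑ y : Y, |M z y * g y| := Finset.abs_sum_le_sum_abs _ _
      _ ≤ ∑ y : Y, M z y * B := by
          refine Finset.sum_le_sum fun y _ => ?_
          rw [abs_mul, abs_of_nonneg (hM0 z y)]
          exact mul_le_mul_of_nonneg_left (hg y) (hM0 z y)
      _ = B := by rw [← Finset.sum_mul, hM1, one_mul]
  set Sm : Matrix Z Z ℝ :=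
    (∑ i : Fin k, Matrix.of fun z z' => φ i z * φ i z') + lam • (1 : Matrix Z Z ℝ) with hSm
  have hsum : ∀ x : Z → ℝ,
      (∑ i : Fin k, (Matrix.of fun z z' => φ i z * φ i z' : Matrix Z Z ℝ)) *ᵥ x
        = ∑ i : Fin k, (Matrix.of fun z z' => φ i z * φ i z' : Matrix Z Z ℝ) *ᵥ x := by
    intro x
    ext z; simp [Matrix.mulVec, dotProduct, Matrix.sum_apply, Finset.sum_mul]
    rw [Finset.sum_comm]
  have hdsum : ∀ (x : Z → ℝ) (v : Fin k → Z → ℝ),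
      x ⬝ᵥ (∑ i, v i) = ∑ i, x ⬝ᵥ v i := by
    intro x v
    simp [dotProduct, Finset.mul_sum]
    rw [Finset.sum_comm]
  have quad : ∀ x : Z → ℝ,
      x ⬝ᵥ Sm *ᵥ x = (∑ i : Fin k, (φ i ⬝ᵥ x) ^ 2) + lam * (x ⬝ᵥ x) := by
    intro x
    have h1 : ∀ i : Fin k,
        x ⬝ᵥ (Matrix.of fun z z' => φ i z * φ i z' : Matrix Z Z ℝ) *ᵥ x
          = (φ i ⬝ᵥ x) ^ 2 := by
      intro i
      simp only [Matrix.mulVec, dotProduct, Matrix.of_apply, pow_two,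
        Finset.mul_sum, Finset.sum_mul]
      rw [Finset.sum_comm]
      congr 1; ext z; congr 1; ext z'; ring
    rw [hSm, Matrix.add_mulVec, dotProduct_add, Matrix.smul_mulVec,
      Matrix.one_mulVec, hsum, hdsum]
    congr 1
    · exact Finset.sum_congr rfl fun i _ => h1 i
    · simp
  have herm : Sm.IsHermitian := by
    refine Matrix.IsHermitian.ext fun i j => ?_
    simp only [hSm, Matrix.add_apply, Matrix.sum_apply, Matrix.smul_apply, Matrix.of_apply,
      Matrix.one_apply, star_trivial]
    rw [show ((if j = i then (1:ℝ) else 0)) = (if i = j then (1:ℝ) else 0) by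
      simp [eq_comm]]
    congr 1
    exact Finset.sum_congr rfl fun _ _ => mul_comm _ _
  have hPD : Sm.PosDef := by
    refine Matrix.PosDef.of_dotProduct_mulVec_pos herm fun x hx => ?_
    have hxx : 0 < x ⬝ᵥ x := by
      have hnn : 0 ≤ x ⬝ᵥ x := Finset.sum_nonneg fun z _ => mul_self_nonneg _
      rcases hnn.lt_or_eq with hlt | heq
      · exact hlt
      · exact absurd ((dotProduct_self_eq_zero).mp heq.symm) hx
    have : 0 < (∑ i : Fin k, (φ i ⬝ᵥ x) ^ 2) + lam * (x ⬝ᵥ x) := by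
      have h1 : 0 ≤ ∑ i : Fin k, (φ i ⬝ᵥ x) ^ 2 :=
        Finset.sum_nonneg fun i _ => sq_nonneg _
      nlinarith
    simpa [star_trivial, quad x] using this
  have hdet : IsUnit Sm.det := hPD.det_pos.ne'.isUnit
  have hinv_mul : Sm⁻¹ * Sm = 1 := Matrix.nonsing_inv_mul _ hdet
  have hInvPSD : Sm⁻¹.PosSemidef := hPD.inv.posSemidef
  have e1 : u ⬝ᵥ Sm⁻¹ *ᵥ (Sm *ᵥ h) = u ⬝ᵥ h := by
    rw [Matrix.mulVec_mulVec, hinv_mul, Matrix.one_mulVec]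
  have e2 : (Sm *ᵥ h) ⬝ᵥ Sm⁻¹ *ᵥ (Sm *ᵥ h) = h ⬝ᵥ Sm *ᵥ h := by
    rw [Matrix.mulVec_mulVec, hinv_mul, Matrix.one_mulVec, dotProduct_comm]
  have key : (u ⬝ᵥ h) ^ 2 ≤ (u ⬝ᵥ Sm⁻¹ *ᵥ u) * (h ⬝ᵥ Sm *ᵥ h) := by
    have := psd_cauchy hInvPSD u (Sm *ᵥ h)
    rwa [e1, e2] at this
  set b : ℝ := u ⬝ᵥ Sm⁻¹ *ᵥ u with hb'
  set c : ℝ := (∑ i : Fin k, (φ i ⬝ᵥ h) ^ 2) + lam * B ^ 2 * Fintype.card Z with hc'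
  have hb : 0 ≤ b := by
    have := hInvPSD.dotProduct_mulVec_nonneg u
    simpa [star_trivial] using this
  have hbound : h ⬝ᵥ Sm *ᵥ h ≤ c := by
    rw [quad h, hc']
    have hhh : h ⬝ᵥ h ≤ B ^ 2 * Fintype.card Z := by
      calc h ⬝ᵥ h = ∑ z : Z, h z * h z := rfl
        _ ≤ ∑ z : Z, B ^ 2 := by
            refine Finset.sum_le_sum fun z _ => ?_
            calc h z * h z = |h z| * |h z| := (abs_mul_abs_self _).symm
              _ ≤ B * B := mul_le_mul (hhB z) (hhB z) (abs_nonneg _) hB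
              _ = B ^ 2 := (sq B).symm
        _ = B ^ 2 * Fintype.card Z := by simp [mul_comm]
    have := mul_le_mul_of_nonneg_left hhh hlam.le
    linarith
  have hc : 0 ≤ c := by
    rw [hc']
    have h1 : 0 ≤ ∑ i : Fin k, (φ i ⬝ᵥ h) ^ 2 :=
      Finset.sum_nonneg fun i _ => sq_nonneg _
    have h2 : (0:ℝ) ≤ lam * B ^ 2 * Fintype.card Z := by positivity
    linarith
  have habc : (u ⬝ᵥ h) ^ 2 ≤ b * c :=
    key.trans (mul_le_mul_of_nonneg_left hbound hb)
  have final : u ⬝ᵥ h ≤ Real.sqrt b * Real.sqrt c := by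
    rcases le_or_gt (u ⬝ᵥ h) 0 with h0 | h0
    · exact h0.trans (mul_nonneg (Real.sqrt_nonneg _) (Real.sqrt_nonneg _))
    · calc u ⬝ᵥ h = Real.sqrt ((u ⬝ᵥ h) ^ 2) := (Real.sqrt_sq h0.le).symm
        _ ≤ Real.sqrt (b * c) := Real.sqrt_le_sqrt habc
        _ = Real.sqrt b * Real.sqrt c := Real.sqrt_mul hb c
  calc (∑ y : Y, (∑ z : Z, u z * M z y) * g y) = u ⬝ᵥ h := expand u
    _ ≤ Real.sqrt b * Real.sqrt c := final
    _ = _ := by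
        rw [hb', hc']
        simp only [expand]
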